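/- arXiv:2507.05431 — 2 statements merged into one kernel-verified Lean document; each statement's English description precedes it below -/
import Mathlib

section
/- A probability measure μ on Ω = {-1,+1}^(Z^d) satisfies the Gaussian concentration bound with constant C = 0 (i.e., log ∫ exp(f - ∫ f dμ) dμ ≤ 0 for all local functions f) if and only if μ is a Dirac measure concentrated on a single configuration σ ∈ Ω. -/
open MeasureTheory Filter
open scoped ENNReal

/-- Spatial configurations: spins (encoded as `Bool`, `true` = +1) indexed by `ι`. -/
abbrev Config (ι : Type*) := ι → Bool

/-- The lattice `ℤ^d`. -/
abbrev Site (d : ℕ) := Fin d → ℤ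

/-- Spin value `±1` of a Boolean. -/
noncomputable def spin (b : Bool) : ℝ := if b then 1 else -1

/-- Flip the spin of `σ` at site `x`. -/
def flipAt {ι : Type*} [DecidableEq ι] (σ : Config ι) (x : ι) : Config ι :=
  Function.update σ x (!σ x)

/-- Oscillation `δ_x f = sup_σ (f(σ^{(x)}) - f(σ))`. -/
noncomputable def osc {ι : Type*} [DecidableEq ι] (f : Config ι → ℝ) (x : ι) : ℝ :=
  ⨆ σ : Config ι, (f (flipAt σ x) - f σ)

/-- `‖δ f‖₂²  = ∑_x (δ_x f)²`. -/
noncomputable def oscNormSq {ι : Type*} [DecidableEq ι] (f : Config ι → ℝ) : ℝ :=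
  ∑' x : ι, osc f x ^ 2

/-- `‖δ f‖₁ = ∑_x δ_x f`. -/
noncomputable def oscNorm1 {ι : Type*} [DecidableEq ι] (f : Config ι → ℝ) : ℝ :=
  ∑' x : ι, osc f x

/-- `f` depends only on the coordinates in `Λ` (i.e. `f` is `F_Λ`-measurable). -/
def LocalOn {ι : Type*} (Λ : Finset ι) (f : Config ι → ℝ) : Prop :=
  ∀ σ τ : Config ι, (∀ x ∈ Λ, σ x = τ x) → f σ = f τ

/-- `f` is a local function. -/
def IsLocal {ι : Type*} (f : Config ι → ℝ) : Prop := ∃ Λ : Finset ι, LocalOn Λ f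

/-- Gaussian concentration bound with constant `C`:
`log ∫ e^{f - ∫ f dμ} dμ ≤ (C/2) ‖δ f‖₂²` for every local function `f`. -/
def GCB {ι : Type*} [DecidableEq ι] (μ : Measure (Config ι)) (C : ℝ) : Prop :=
  ∀ f : Config ι → ℝ, IsLocal f →
    Real.log (∫ σ, Real.exp (f σ - ∫ τ, f τ ∂μ) ∂μ) ≤ C / 2 * oscNormSq f

/-- The cylinder set of configurations agreeing with `b` on `Λ`. -/
def cyl {ι : Type*} (Λ : Finset ι) (b : ι → Bool) : Set (Config ι) :=
  {σ | ∀ x ∈ Λ, σ x = b x}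

/-- A local function is measurable. -/
lemma measurable_of_isLocal {ι : Type*} {f : Config ι → ℝ} (hf : IsLocal f) :
    Measurable f := by
  classical
  obtain ⟨Λ, hΛ⟩ := hf
  have hfac : f = (fun y : (Λ → Bool) => f (fun i => if h : i ∈ Λ then y ⟨i, h⟩ else false)) ∘
      (fun σ (i : Λ) => σ i) := by
    funext σ
    exact hΛ σ _ (fun x hx => by simp [hx])
  rw [hfac]
  exact (measurable_of_countable _).comp
    (measurable_pi_lambda _ fun i => measurable_pi_apply (i : ι))

/-- Key step: under GCB(0), each coordinate is a.s. constant. -/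
lemma coord_ae_const {d : ℕ} (μ : Measure (Config (Site d))) [IsProbabilityMeasure μ]
    (h : GCB μ 0) (x : Site d) : ∃ b : Bool, ∀ᵐ σ ∂μ, σ x = b := by
  classical
  set f : Config (Site d) → ℝ := fun σ => if σ x then 1 else 0 with hfdef
  have hloc : IsLocal f :=
    ⟨{x}, fun σ τ hστ => by simp [hfdef, hστ x (Finset.mem_singleton_self x)]⟩
  have hmeas : Measurable f := measurable_of_isLocal hloc
  have hbd : ∀ σ, ‖f σ‖ ≤ 1 := by
    intro σ; by_cases hb : σ x <;> simp [hfdef, hb]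
  have hint : Integrable f μ :=
    ⟨hmeas.aestronglyMeasurable, HasFiniteIntegral.of_bounded (ae_of_all _ hbd)⟩
  set m : ℝ := ∫ τ, f τ ∂μ with hm
  have hmbd : |m| ≤ 1 := by
    have h1 : ‖∫ τ, f τ ∂μ‖ ≤ ∫ τ, ‖f τ‖ ∂μ := norm_integral_le_integral_norm f
    have h2 : ∫ τ, ‖f τ‖ ∂μ ≤ ∫ _, (1:ℝ) ∂μ :=
      integral_mono hint.norm (integrable_const 1) hbd
    have h3 : ∫ _, (1:ℝ) ∂μ = 1 := by simp
    rw [h3] at h2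
    simpa [hm, Real.norm_eq_abs] using h1.trans h2
  set g : Config (Site d) → ℝ := fun σ => f σ - m with hg
  have hgmeas : Measurable g := hmeas.sub measurable_const
  have hgint : Integrable g μ := hint.sub (integrable_const m)
  have hgzero : ∫ σ, g σ ∂μ = 0 := by
    rw [hg]; simp only
    rw [integral_sub hint (integrable_const m), integral_const]
    simp [hm]
  have hegbd : ∀ σ, ‖Real.exp (g σ)‖ ≤ Real.exp 2 := by
    intro σ
    rw [Real.norm_eq_abs, abs_of_pos (Real.exp_pos _)]
    apply Real.exp_le_exp.mpr
    have h1 : f σ ≤ 1 := (abs_le.mp (by simpa [Real.norm_eq_abs] using hbd σ)).2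
    have h2 : -m ≤ 1 := by linarith [(abs_le.mp hmbd).1]
    simp only [hg]; linarith
  have hegint : Integrable (fun σ => Real.exp (g σ)) μ :=
    ⟨((hgmeas).exp).aestronglyMeasurable,
      HasFiniteIntegral.of_bounded (ae_of_all _ hegbd)⟩
  -- upper bound from GCB
  have hle : ∫ σ, Real.exp (g σ) ∂μ ≤ 1 := by
    by_contra hc
    push_neg at hc
    have hgcb := h f hloc
    simp only [zero_div, zero_mul] at hgcb
    have hlog : 0 < Real.log (∫ σ, Real.exp (f σ - ∫ τ, f τ ∂μ) ∂μ) := by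
      apply Real.log_pos
      simpa [hg, hm] using hc
    linarith
  -- lower bound: e^t ≥ 1 + t
  have hpoint : ∀ σ, 0 ≤ Real.exp (g σ) - (g σ + 1) := by
    intro σ; linarith [Real.add_one_le_exp (g σ)]
  have hdiffint : Integrable (fun σ => Real.exp (g σ) - (g σ + 1)) μ :=
    hegint.sub (hgint.add (integrable_const 1))
  have hdint : ∫ σ, (Real.exp (g σ) - (g σ + 1)) ∂μ = 0 := by
    have hsum : ∫ σ, (g σ + 1) ∂μ = 1 := by
      rw [integral_add hgint (integrable_const 1), hgzero]; simp
    have heq : ∫ σ, (Real.exp (g σ) - (g σ + 1)) ∂μ =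
        (∫ σ, Real.exp (g σ) ∂μ) - ∫ σ, (g σ + 1) ∂μ :=
      integral_sub hegint (hgint.add (integrable_const 1))
    have hnn : 0 ≤ ∫ σ, (Real.exp (g σ) - (g σ + 1)) ∂μ :=
      integral_nonneg hpoint
    rw [hsum] at heq
    linarith
  have hae : ∀ᵐ σ ∂μ, Real.exp (g σ) - (g σ + 1) = 0 := by
    have := (integral_eq_zero_iff_of_nonneg hpoint hdiffint).mp hdint
    filter_upwards [this] with σ hσ using hσ
  have haeg : ∀ᵐ σ ∂μ, f σ = m := by
    filter_upwards [hae] with σ hσ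
    by_contra hne
    have hgne : g σ ≠ 0 := fun hh => hne (by simpa [hg, sub_eq_zero] using hh)
    have := Real.add_one_lt_exp hgne
    linarith
  -- extract a witness
  haveI hne : (ae μ).NeBot := ae_neBot.mpr (IsProbabilityMeasure.ne_zero μ)
  obtain ⟨σ₀, hσ₀⟩ := haeg.exists
  refine ⟨σ₀ x, ?_⟩
  filter_upwards [haeg] with σ hσ
  have hfe : (if σ x then (1:ℝ) else 0) = (if σ₀ x then 1 else 0) := by
    show f σ = f σ₀
    rw [hσ, hσ₀]
  cases h1 : σ x <;> cases h2 : σ₀ x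
  · rfl
  · rw [h1, h2] at hfe; norm_num at hfe
  · rw [h1, h2] at hfe; norm_num at hfe
  · rfl

/-- a probability measure on `{-1,+1}^{ℤ^d}` satisfies `GCB(0)` if and
only if it is a Dirac measure concentrated on a single configuration. -/
theorem gcb_zero_iff_dirac {d : ℕ} (μ : Measure (Config (Site d)))
    [IsProbabilityMeasure μ] :
    GCB μ 0 ↔ ∃ σ : Config (Site d), μ = Measure.dirac σ := by
  constructor
  · intro h
    choose b hb using coord_ae_const μ h
    refine ⟨b, ?_⟩
    have haeb : ∀ᵐ σ ∂μ, σ = b := by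
      have := ae_all_iff.mpr hb
      filter_upwards [this] with σ hσ using funext hσ
    have hc : μ ({b}ᶜ) = 0 := by
      have h0 : μ {σ | ¬ σ = b} = 0 := haeb
      have hset : {σ : Config (Site d) | ¬ σ = b} = ({b} : Set (Config (Site d)))ᶜ := by
        ext σ; simp [eq_comm]
      rwa [hset] at h0
    have hsingle : μ {b} = 1 := by
      have hcompl := measure_compl (μ := μ) (measurableSet_singleton b) (measure_ne_top μ _)
      rw [hc, measure_univ] at hcompl
      have h1 : (1:ℝ≥0∞) ≤ μ {b} := tsub_eq_zero_iff_le.mp hcompl.symm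
      exact le_antisymm prob_le_one h1
    ext s hs
    rw [Measure.dirac_apply' b hs]
    by_cases hbs : b ∈ s
    · have h1 : μ s ≤ 1 := prob_le_one
      have h2 : (1:ℝ≥0∞) ≤ μ s := hsingle ▸ measure_mono (Set.singleton_subset_iff.mpr hbs)
      simp [Set.indicator_of_mem hbs, le_antisymm h1 h2]
    · have hsub : s ⊆ ({b} : Set (Config (Site d)))ᶜ :=
        fun σ hσ hσb => hbs (Set.mem_singleton_iff.mp hσb ▸ hσ)
      have h0 : μ s = 0 := le_antisymm ((measure_mono hsub).trans hc.le) zero_le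
      simp [Set.indicator_of_notMem hbs, h0]
  · rintro ⟨σ₀, rfl⟩
    intro f hf
    have hmeas : Measurable f := measurable_of_isLocal hf
    have h1 : ∫ τ, f τ ∂(Measure.dirac σ₀) = f σ₀ :=
      integral_dirac' f σ₀ hmeas.stronglyMeasurable
    rw [h1]
    have hsm : StronglyMeasurable (fun σ : Config (Site d) => Real.exp (f σ - f σ₀)) :=
      ((hmeas.sub measurable_const).exp).stronglyMeasurable
    rw [integral_dirac' _ σ₀ hsm, sub_self, Real.exp_zero, Real.log_one]
    simp
end

section
/- If a translation-invariant probability measure μ on {-1,+1}^(Z^d) satisfies GCB(C), then for every translation-invariant probability measure ν, the lower relative entropy density satisfies s_*(ν|μ) ≥ d̄(ν,μ)²/(2C), where d̄ is the Dobrushin distance. In particular ν ≠ μ implies s_*(ν|μ) > 0. -/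
open MeasureTheory Filter
open scoped ENNReal

/-- The shift (translation) of a configuration by `a ∈ ℤ^d`. -/
def shift {d : ℕ} (a : Site d) (σ : Config (Site d)) : Config (Site d) :=
  fun x => σ (x + a)

/-- Translation invariance of a measure on `{-1,+1}^{ℤ^d}`. -/
def TransInv {d : ℕ} (μ : Measure (Config (Site d))) : Prop :=
  ∀ a : Site d, μ.map (shift a) = μ

/-- The cube `C_n = [-n,n]^d ∩ ℤ^d` as a finite set of sites. -/
noncomputable def cube (d n : ℕ) : Finset (Site d) :=
  Fintype.piFinset fun _ : Fin d => Finset.Icc (-(n : ℤ)) (n : ℤ)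

/-- The relative entropy `S_Λ(ν|μ)` of the `Λ`-marginals (in `[0,∞]`,
`∞` unless `ν_Λ ≪ μ_Λ`). -/
noncomputable def relEntVol {ι : Type*} [DecidableEq ι]
    (ν μ : Measure (Config ι)) (Λ : Finset ι) : ℝ≥0∞ := by
  classical
  exact
    if ∀ b : ι → Bool, μ (cyl Λ b) = 0 → ν (cyl Λ b) = 0 then
      ENNReal.ofReal (∑ b : Λ → Bool,
        (ν (cyl Λ fun x => if h : x ∈ Λ then b ⟨x, h⟩ else false)).toReal *
          Real.log ((ν (cyl Λ fun x => if h : x ∈ Λ then b ⟨x, h⟩ else false)).toReal /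
            (μ (cyl Λ fun x => if h : x ∈ Λ then b ⟨x, h⟩ else false)).toReal))
    else ⊤

/-- The lower relative entropy density `s_*(ν|μ) = liminf_n S_{C_n}(ν|μ)/|C_n|`. -/
noncomputable def sStar {d : ℕ} (ν μ : Measure (Config (Site d))) : ℝ≥0∞ :=
  Filter.liminf (fun n : ℕ => relEntVol ν μ (cube d n) / ((cube d n).card : ℝ≥0∞))
    Filter.atTop

/-- The Dobrushin distance
`d̄(ν,μ) = sup { ∫ f dμ - ∫ f dν : ‖δ f‖₁ ≤ 1 }` (over local functions). -/
noncomputable def dbar {d : ℕ} (ν μ : Measure (Config (Site d))) : ℝ :=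
  ⨆ f : {f : Config (Site d) → ℝ // IsLocal f ∧ oscNorm1 f ≤ 1},
    (∫ σ, (f : Config (Site d) → ℝ) σ ∂μ - ∫ σ, (f : Config (Site d) → ℝ) σ ∂ν)

section General
set_option linter.unusedSectionVars false
variable {ι : Type*} [DecidableEq ι]

noncomputable def extFun (Λ : Finset ι) (b : Λ → Bool) : Config ι :=
  fun x => if h : x ∈ Λ then b ⟨x, h⟩ else false

lemma measurableSet_cyl (Λ : Finset ι) (b : ι → Bool) : MeasurableSet (cyl Λ b) := by
  have : cyl Λ b = ⋂ x ∈ (Λ : Set ι), (fun σ : Config ι => σ x) ⁻¹' {b x} := by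
    ext σ; simp [cyl]
  rw [this]
  exact MeasurableSet.biInter (Λ.countable_toSet)
    (fun x _ => (measurable_pi_apply x) (measurableSet_singleton _))

lemma mem_cyl_ext_iff (Λ : Finset ι) (b : Λ → Bool) (σ : Config ι) :
    σ ∈ cyl Λ (extFun Λ b) ↔ (fun x : Λ => σ x) = b := by
  constructor
  · intro h; funext x
    have := h x x.2
    simpa [extFun] using this
  · intro h x hx
    have := congrFun h ⟨x, hx⟩
    simp only at this
    simp [extFun, hx, this]

lemma localOn_ext (Λ : Finset ι) {g : Config ι → ℝ} (hg : LocalOn Λ g) (σ : Config ι) :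
    g σ = g (extFun Λ (fun x : Λ => σ x)) := by
  apply hg
  intro x hx; simp [extFun, hx]

lemma localOn_abs_le (Λ : Finset ι) {g : Config ι → ℝ} (hg : LocalOn Λ g) (σ : Config ι) :
    |g σ| ≤ ∑ b : Λ → Bool, |g (extFun Λ b)| := by
  rw [localOn_ext Λ hg σ]
  exact Finset.single_le_sum (f := fun b => |g (extFun Λ b)|)
    (fun b _ => abs_nonneg _) (Finset.mem_univ _)

lemma localOn_repr (Λ : Finset ι) {g : Config ι → ℝ} (hg : LocalOn Λ g) (σ : Config ι) :
    g σ = ∑ b : Λ → Bool, (cyl Λ (extFun Λ b)).indicator (fun _ => g (extFun Λ b)) σ := by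
  classical
  rw [Finset.sum_eq_single (fun x : Λ => σ x)]
  · rw [Set.indicator_of_mem (by rw [mem_cyl_ext_iff])]
    exact localOn_ext Λ hg σ
  · intro b _ hb
    rw [Set.indicator_of_notMem]
    rw [mem_cyl_ext_iff]; exact fun h => hb h.symm
  · intro h; exact absurd (Finset.mem_univ _) h

lemma localOn_measurable (Λ : Finset ι) {g : Config ι → ℝ} (hg : LocalOn Λ g) :
    Measurable g := by
  have : g = fun σ => ∑ b : Λ → Bool, (cyl Λ (extFun Λ b)).indicator (fun _ => g (extFun Λ b)) σ := by
    funext σ; exact localOn_repr Λ hg σ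
  rw [this]
  exact Finset.measurable_sum _ fun b _ =>
    (measurable_const.indicator (measurableSet_cyl _ _))

lemma localOn_integrable (Λ : Finset ι) {g : Config ι → ℝ}
    (μ : Measure (Config ι)) [IsProbabilityMeasure μ] (hg : LocalOn Λ g) :
    Integrable g μ :=
  (integrable_const (∑ b : Λ → Bool, |g (extFun Λ b)|)).mono'
    (localOn_measurable Λ hg).aestronglyMeasurable
    (Filter.Eventually.of_forall fun σ => by
      simpa using localOn_abs_le Λ hg σ)

lemma pairwise_disjoint_cyl (Λ : Finset ι) :
    Set.PairwiseDisjoint (Set.univ : Set (Λ → Bool)) (fun b => cyl Λ (extFun Λ b)) := by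
  intro b _ b' _ hbb'
  refine Set.disjoint_left.2 fun σ h1 h2 => ?_
  rw [mem_cyl_ext_iff] at h1 h2
  exact hbb' (h1 ▸ h2 ▸ rfl)

lemma union_cyl (Λ : Finset ι) :
    ⋃ b ∈ (Finset.univ : Finset (Λ → Bool)), cyl Λ (extFun Λ b) = Set.univ := by
  ext σ
  simp only [Set.mem_iUnion, Set.mem_univ, iff_true]
  exact ⟨fun x : Λ => σ x, Finset.mem_univ _, (mem_cyl_ext_iff _ _ _).2 rfl⟩

lemma sum_meas_cyl (Λ : Finset ι) (μ : Measure (Config ι)) [IsProbabilityMeasure μ] :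
    ∑ b : Λ → Bool, (μ (cyl Λ (extFun Λ b))).toReal = 1 := by
  have h := measure_biUnion_finset (μ := μ) (s := (Finset.univ : Finset (Λ → Bool)))
    (f := fun b => cyl Λ (extFun Λ b))
    (by simpa using pairwise_disjoint_cyl Λ) (fun b _ => measurableSet_cyl _ _)
  rw [union_cyl, measure_univ] at h
  rw [← ENNReal.toReal_sum (fun b _ => measure_ne_top μ _), ← h, ENNReal.toReal_one]

lemma integral_localOn (Λ : Finset ι) {g : Config ι → ℝ}
    (μ : Measure (Config ι)) [IsProbabilityMeasure μ] (hg : LocalOn Λ g) :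
    ∫ σ, g σ ∂μ = ∑ b : Λ → Bool, (μ (cyl Λ (extFun Λ b))).toReal * g (extFun Λ b) := by
  calc ∫ σ, g σ ∂μ
      = ∫ σ, ∑ b : Λ → Bool, (cyl Λ (extFun Λ b)).indicator (fun _ => g (extFun Λ b)) σ ∂μ := by
        congr 1; funext σ; exact localOn_repr Λ hg σ
    _ = ∑ b : Λ → Bool, ∫ σ, (cyl Λ (extFun Λ b)).indicator (fun _ => g (extFun Λ b)) σ ∂μ := by
        refine integral_finset_sum _ fun b _ => ?_
        exact (integrable_const _).indicator (measurableSet_cyl _ _)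
    _ = ∑ b : Λ → Bool, (μ (cyl Λ (extFun Λ b))).toReal * g (extFun Λ b) := by
        refine Finset.sum_congr rfl fun b _ => ?_
        rw [MeasureTheory.integral_indicator_const _ (measurableSet_cyl _ _), smul_eq_mul, measureReal_def]

end General
section Osc
set_option linter.unusedSectionVars false
variable {ι : Type*} [DecidableEq ι]

lemma flipAt_flipAt (σ : Config ι) (x : ι) : flipAt (flipAt σ x) x = σ := by
  funext y
  by_cases h : y = x
  · subst h; simp [flipAt]
  · simp [flipAt, Function.update_apply, h]

lemma bddAbove_flip_range (Λ : Finset ι) {g : Config ι → ℝ} (hg : LocalOn Λ g) (x : ι) :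
    BddAbove (Set.range fun σ : Config ι => g (flipAt σ x) - g σ) := by
  refine ⟨2 * ∑ b : Λ → Bool, |g (extFun Λ b)|, ?_⟩
  rintro r ⟨σ, rfl⟩
  have h1 := localOn_abs_le Λ hg (flipAt σ x)
  have h2 := localOn_abs_le Λ hg σ
  have := abs_sub_abs_le_abs_sub (g (flipAt σ x)) (g σ)
  calc g (flipAt σ x) - g σ ≤ |g (flipAt σ x)| + |g σ| := by
        have := abs_sub (g (flipAt σ x)) (g σ)
        calc g (flipAt σ x) - g σ ≤ |g (flipAt σ x) - g σ| := le_abs_self _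
          _ ≤ |g (flipAt σ x)| + |g σ| := abs_sub _ _
    _ ≤ _ := by linarith

lemma osc_nonneg (Λ : Finset ι) {g : Config ι → ℝ} (hg : LocalOn Λ g) (x : ι) :
    0 ≤ osc g x := by
  have hb := bddAbove_flip_range Λ hg x
  have h1 : ∀ σ : Config ι, g (flipAt σ x) - g σ ≤ osc g x := fun σ => le_ciSup hb σ
  have σ0 : Config ι := fun _ => false
  have h2 := h1 σ0
  have h3 := h1 (flipAt σ0 x)
  rw [flipAt_flipAt] at h3
  linarith

lemma osc_le (x : ι) {g : Config ι → ℝ} {M : ℝ}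
    (h : ∀ σ : Config ι, g (flipAt σ x) - g σ ≤ M) : osc g x ≤ M :=
  ciSup_le h

lemma le_osc (Λ : Finset ι) {g : Config ι → ℝ} (hg : LocalOn Λ g) (x : ι) (σ : Config ι) :
    g (flipAt σ x) - g σ ≤ osc g x :=
  le_ciSup (bddAbove_flip_range Λ hg x) σ

lemma osc_eq_zero (Λ : Finset ι) {g : Config ι → ℝ} (hg : LocalOn Λ g) {x : ι}
    (hx : x ∉ Λ) : osc g x = 0 := by
  have : ∀ σ : Config ι, g (flipAt σ x) - g σ = 0 := by
    intro σ
    have : g (flipAt σ x) = g σ := by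
      apply hg; intro y hy
      have : y ≠ x := fun h => hx (h ▸ hy)
      simp [flipAt, Function.update_apply, this]
    linarith
  simp only [osc, this, ciSup_const]

lemma oscNorm1_eq_sum (Λ : Finset ι) {g : Config ι → ℝ} (hg : LocalOn Λ g) :
    oscNorm1 g = ∑ x ∈ Λ, osc g x := by
  refine tsum_eq_sum fun x hx => osc_eq_zero Λ hg hx

lemma oscNormSq_eq_sum (Λ : Finset ι) {g : Config ι → ℝ} (hg : LocalOn Λ g) :
    oscNormSq g = ∑ x ∈ Λ, osc g x ^ 2 := by
  refine tsum_eq_sum fun x hx => by rw [osc_eq_zero Λ hg hx]; ring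

lemma osc_neg (Λ : Finset ι) {g : Config ι → ℝ} (hg : LocalOn Λ g) (x : ι) :
    osc (fun σ => -g σ) x = osc g x := by
  have hsurj : Function.Surjective (fun σ : Config ι => flipAt σ x) :=
    fun σ => ⟨flipAt σ x, flipAt_flipAt σ x⟩
  unfold osc
  calc (⨆ σ : Config ι, (-g (flipAt σ x) - -g σ))
      = ⨆ σ : Config ι, (g σ - g (flipAt σ x)) := by congr 1; funext σ; ring
    _ = ⨆ σ : Config ι, (g (flipAt σ x) - g (flipAt (flipAt σ x) x)) := by
        exact (hsurj.iSup_comp fun τ => g τ - g (flipAt τ x)).symm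
    _ = ⨆ σ : Config ι, (g (flipAt σ x) - g σ) := by
        congr 1; funext σ; rw [flipAt_flipAt]

lemma localOn_neg (Λ : Finset ι) {g : Config ι → ℝ} (hg : LocalOn Λ g) :
    LocalOn Λ (fun σ => -g σ) := fun σ τ h => by simp only []; rw [hg σ τ h]

lemma oscNorm1_neg (Λ : Finset ι) {g : Config ι → ℝ} (hg : LocalOn Λ g) :
    oscNorm1 (fun σ => -g σ) = oscNorm1 g := by
  rw [oscNorm1_eq_sum Λ (localOn_neg Λ hg), oscNorm1_eq_sum Λ hg]
  exact Finset.sum_congr rfl fun x _ => osc_neg Λ hg x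

lemma localOn_zero (Λ : Finset ι) : LocalOn Λ (fun _ : Config ι => (0:ℝ)) :=
  fun _ _ _ => rfl

lemma oscNorm1_zero : oscNorm1 (fun _ : Config ι => (0:ℝ)) = 0 := by
  rw [oscNorm1_eq_sum (∅ : Finset ι) (localOn_zero ∅)]
  simp

end Osc
section DV
set_option linter.unusedSectionVars false

lemma dv_finite {κ : Type*} [Fintype κ] (p q h : κ → ℝ)
    (hp : ∀ i, 0 ≤ p i) (hq : ∀ i, 0 ≤ q i)
    (hp1 : ∑ i, p i = 1) (hq1 : ∑ i, q i = 1)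
    (hac : ∀ i, q i = 0 → p i = 0) :
    ∑ i, p i * h i ≤ ∑ i, p i * Real.log (p i / q i) +
      Real.log (∑ i, q i * Real.exp (h i)) := by
  classical
  set Z : ℝ := ∑ i, q i * Real.exp (h i) with hZ
  have hqpos : ∃ i ∈ Finset.univ, 0 < q i * Real.exp (h i) := by
    by_contra hcon
    push_neg at hcon
    have : ∀ i, q i = 0 := by
      intro i
      have h1 := hcon i (Finset.mem_univ i)
      have h2 : 0 ≤ q i * Real.exp (h i) := mul_nonneg (hq i) (Real.exp_pos _).le
      have h3 : q i * Real.exp (h i) = 0 := le_antisymm h1 h2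
      rcases mul_eq_zero.1 h3 with h4 | h4
      · exact h4
      · exact absurd h4 (Real.exp_pos _).ne'
    simp [this] at hq1
  have hZpos : 0 < Z :=
    Finset.sum_pos' (fun i _ => mul_nonneg (hq i) (Real.exp_pos _).le) hqpos
  -- termwise bound
  set r : κ → ℝ := fun i => if p i = 0 then 0 else q i * Real.exp (h i) / Z with hr
  have key : ∀ i, p i - r i ≤ p i * Real.log (p i / q i) - p i * h i + p i * Real.log Z := by
    intro i
    by_cases hpi : p i = 0
    · simp [hpi, r]
    · have hppos : 0 < p i := lt_of_le_of_ne (hp i) (Ne.symm hpi)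
      have hqpos' : 0 < q i := by
        rcases lt_or_eq_of_le (hq i) with h' | h'
        · exact h'
        · exact absurd (hac i h'.symm) hpi
      have hri : r i = q i * Real.exp (h i) / Z := by simp [r, hpi]
      have hrpos : 0 < r i := by
        rw [hri]; positivity
      have hlog := Real.log_le_sub_one_of_pos (x := r i / p i) (by positivity)
      have hlogr : Real.log (r i) = Real.log (q i) + h i - Real.log Z := by
        rw [hri, Real.log_div (by positivity) hZpos.ne', Real.log_mul hqpos'.ne'
          (Real.exp_pos _).ne', Real.log_exp]
      rw [Real.log_div hrpos.ne' hppos.ne'] at hlog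
      have hlogpq : Real.log (p i / q i) = Real.log (p i) - Real.log (q i) :=
        Real.log_div hppos.ne' hqpos'.ne'
      have hmul : (Real.log (r i) - Real.log (p i)) * p i ≤ (r i / p i - 1) * p i :=
        mul_le_mul_of_nonneg_right hlog hppos.le
      have hfrac : (r i / p i - 1) * p i = r i - p i := by field_simp
      rw [hfrac, hlogr] at hmul
      rw [hlogpq]
      nlinarith [hmul]
  have hsumr : ∑ i, r i ≤ 1 := by
    have h1 : ∀ i, r i ≤ q i * Real.exp (h i) / Z := by
      intro i
      by_cases hpi : p i = 0
      · simp only [r, hpi, if_pos]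
        exact div_nonneg (mul_nonneg (hq i) (Real.exp_pos _).le) hZpos.le
      · simp [r, hpi]
    calc ∑ i, r i ≤ ∑ i, q i * Real.exp (h i) / Z := Finset.sum_le_sum fun i _ => h1 i
      _ = Z / Z := by rw [← Finset.sum_div]
      _ = 1 := div_self hZpos.ne'
  have hsum := Finset.sum_le_sum fun i (_ : i ∈ Finset.univ) => key i
  rw [Finset.sum_sub_distrib] at hsum
  rw [hp1] at hsum
  have hexp : ∑ i, (p i * Real.log (p i / q i) - p i * h i + p i * Real.log Z)
      = ∑ i, p i * Real.log (p i / q i) - ∑ i, p i * h i + Real.log Z := by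
    rw [Finset.sum_add_distrib, Finset.sum_sub_distrib, ← Finset.sum_mul, hp1, one_mul]
  rw [hexp] at hsum
  linarith

variable {ι : Type*} [DecidableEq ι]

lemma extFun_def (Λ : Finset ι) (b : Λ → Bool) :
    (fun x => if h : x ∈ Λ then b ⟨x, h⟩ else false) = extFun Λ b := rfl

lemma relEntVol_ge (Λ : Finset ι) (μ ν : Measure (Config ι))
    [IsProbabilityMeasure μ] [IsProbabilityMeasure ν] {g : Config ι → ℝ}
    (hg : LocalOn Λ g) :
    ENNReal.ofReal ((∫ σ, g σ ∂ν) - (∫ σ, g σ ∂μ) -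
      Real.log (∫ σ, Real.exp (g σ - ∫ τ, g τ ∂μ) ∂μ)) ≤ relEntVol ν μ Λ := by
  classical
  unfold relEntVol
  split_ifs with hcond
  · simp only [extFun_def]
    refine ENNReal.ofReal_le_ofReal ?_
    set p : (Λ → Bool) → ℝ := fun b => (ν (cyl Λ (extFun Λ b))).toReal with hp'
    set q : (Λ → Bool) → ℝ := fun b => (μ (cyl Λ (extFun Λ b))).toReal with hq'
    have hp : ∀ b, 0 ≤ p b := fun b => ENNReal.toReal_nonneg
    have hq : ∀ b, 0 ≤ q b := fun b => ENNReal.toReal_nonneg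
    have hp1 : ∑ b, p b = 1 := sum_meas_cyl Λ ν
    have hq1 : ∑ b, q b = 1 := sum_meas_cyl Λ μ
    have hac : ∀ b, q b = 0 → p b = 0 := by
      intro b hb
      have : μ (cyl Λ (extFun Λ b)) = 0 := by
        have := (ENNReal.toReal_eq_zero_iff _).1 hb
        rcases this with h | h
        · exact h
        · exact absurd h (measure_ne_top μ _)
      have := hcond _ this
      simp [p, this]
    set mg : ℝ := ∫ τ, g τ ∂μ with hmg
    have hIν : ∫ σ, g σ ∂ν = ∑ b, p b * g (extFun Λ b) := integral_localOn Λ ν hg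
    have hIμ : mg = ∑ b, q b * g (extFun Λ b) := integral_localOn Λ μ hg
    have hGloc : LocalOn Λ (fun σ => Real.exp (g σ - mg)) := by
      intro σ τ h; simp only []; rw [hg σ τ h]
    have hIexp : ∫ σ, Real.exp (g σ - mg) ∂μ
        = ∑ b, q b * Real.exp (g (extFun Λ b) - mg) := integral_localOn Λ μ hGloc
    have hdv := dv_finite p q (fun b => g (extFun Λ b) - mg) hp hq hp1 hq1 hac
    have hlhs : ∑ b, p b * (g (extFun Λ b) - mg)
        = (∫ σ, g σ ∂ν) - mg := by
      rw [hIν]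
      rw [Finset.sum_congr rfl (fun b _ => mul_sub (p b) (g (extFun Λ b)) mg)]
      rw [Finset.sum_sub_distrib, ← Finset.sum_mul, hp1, one_mul]
    rw [hlhs] at hdv
    rw [hIexp]
    linarith [hdv]
  · exact le_top
section SiteLemmas
set_option linter.unusedSectionVars false
set_option maxHeartbeats 1600000
variable {d : ℕ}

lemma measurable_shift (a : Site d) : Measurable (shift a) :=
  measurable_pi_lambda _ fun x => measurable_pi_apply (x + a)

lemma shift_flipAt (a : Site d) (σ : Config (Site d)) (x : Site d) :
    shift a (flipAt σ x) = flipAt (shift a σ) (x - a) := by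
  funext y
  by_cases h : y = x - a
  · subst h
    have hx : x - a + a = x := by ring
    simp [shift, flipAt, Function.update_apply, hx]
  · have h2 : y + a ≠ x := fun hc => h (by rw [← hc]; ring)
    simp [shift, flipAt, Function.update_apply, h, h2]

lemma mem_cube_iff {n : ℕ} {x : Site d} :
    x ∈ cube d n ↔ ∀ i, -(n:ℤ) ≤ x i ∧ x i ≤ (n:ℤ) := by
  simp [cube, Fintype.mem_piFinset, Finset.mem_Icc]

lemma cube_add {m k n : ℕ} (h : m + k ≤ n) {y a : Site d}
    (hy : y ∈ cube d m) (ha : a ∈ cube d k) : y + a ∈ cube d n := by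
  rw [mem_cube_iff] at *
  intro i
  have h1 := hy i
  have h2 := ha i
  have h3 : (m:ℤ) + (k:ℤ) ≤ (n:ℤ) := by exact_mod_cast h
  constructor <;> simp only [Pi.add_apply] <;> omega

lemma localOn_mono {ι : Type*} {Λ Λ' : Finset ι} {f : Config ι → ℝ}
    (h : Λ ⊆ Λ') (hf : LocalOn Λ f) : LocalOn Λ' f :=
  fun σ τ hστ => hf σ τ fun x hx => hστ x (h hx)

lemma exists_cube_subset (Λ : Finset (Site d)) : ∃ m : ℕ, Λ ⊆ cube d m := by
  classical
  obtain ⟨M, hM⟩ : ∃ M : ℕ, M = Λ.sup fun x => Finset.univ.sup fun i => (x i).natAbs :=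
    ⟨_, rfl⟩
  refine ⟨M, ?_⟩
  intro x hx
  rw [mem_cube_iff]
  intro i
  have hB : (x i).natAbs ≤ Finset.univ.sup fun i => (x i).natAbs :=
    Finset.le_sup (f := fun i => (x i).natAbs) (Finset.mem_univ i)
  have hA : (Finset.univ.sup fun i => (x i).natAbs) ≤
      Λ.sup fun x => Finset.univ.sup fun i => (x i).natAbs :=
    Finset.le_sup (f := fun x => Finset.univ.sup fun i => (x i).natAbs) hx
  have h1 : (x i).natAbs ≤ M := by rw [hM]; exact le_trans hB hA
  clear hM hB hA
  omega

lemma integral_shift {μ : Measure (Config (Site d))} (hTI : TransInv μ) (a : Site d)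
    {f : Config (Site d) → ℝ} (hf : Measurable f) :
    ∫ σ, f (shift a σ) ∂μ = ∫ σ, f σ ∂μ := by
  have hm : Measurable (shift a) := measurable_shift a
  have h := integral_map (μ := μ) (φ := shift a) hm.aemeasurable (f := f)
    (by rw [hTI a]; exact hf.aestronglyMeasurable)
  rw [hTI a] at h
  exact h.symm

lemma key_bound {d : ℕ} (μ ν : Measure (Config (Site d)))
    [IsProbabilityMeasure μ] [IsProbabilityMeasure ν]
    (hμTI : TransInv μ) (hνTI : TransInv ν) (C : ℝ) (hC : 0 < C) (hgcb : GCB μ C)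
    {f : Config (Site d) → ℝ} {m : ℕ} (hf : LocalOn (cube d m) f)
    (h1 : oscNorm1 f ≤ 1) (hD : 0 ≤ ∫ σ, f σ ∂μ - ∫ σ, f σ ∂ν)
    {n : ℕ} (hn : m ≤ n) :
    ENNReal.ofReal (((cube d (n - m)).card : ℝ) *
      ((∫ σ, f σ ∂μ - ∫ σ, f σ ∂ν) ^ 2 / (2 * C))) ≤ relEntVol ν μ (cube d n) := by
  classical
  set D : ℝ := ∫ σ, f σ ∂μ - ∫ σ, f σ ∂ν with hDdef
  set t : ℝ := D / C with htdef
  have ht : 0 ≤ t := div_nonneg hD hC.le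
  set A : Finset (Site d) := cube d (n - m) with hA
  set Λn : Finset (Site d) := cube d n with hΛn
  have hmk : m + (n - m) ≤ n := by omega
  set g : Config (Site d) → ℝ := fun σ => -t * ∑ a ∈ A, f (shift a σ) with hg
  have hfmeas : Measurable f := localOn_measurable _ hf
  -- locality of the shifted summands
  have hshift_local : ∀ a ∈ A, LocalOn Λn fun σ => f (shift a σ) := by
    intro a ha σ τ hστ
    simp only []
    apply hf
    intro y hy
    exact hστ (y + a) (cube_add hmk hy ha)
  have hgloc : LocalOn Λn g := by
    intro σ τ hστ
    simp only [hg]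
    congr 1
    exact Finset.sum_congr rfl fun a ha => hshift_local a ha σ τ hστ
  -- integrals
  have hint : ∀ (ρ : Measure (Config (Site d))) [IsProbabilityMeasure ρ], TransInv ρ →
      ∫ σ, g σ ∂ρ = -t * (A.card * ∫ σ, f σ ∂ρ) := by
    intro ρ _ hTI
    simp only [hg]
    rw [integral_const_mul]
    congr 1
    rw [integral_finset_sum _ fun a ha => localOn_integrable Λn ρ (hshift_local a ha)]
    rw [Finset.sum_congr rfl fun a _ => integral_shift hTI a hfmeas]
    rw [Finset.sum_const, nsmul_eq_mul]
  have hdiff : (∫ σ, g σ ∂ν) - ∫ σ, g σ ∂μ = t * A.card * D := by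
    rw [hint μ hμTI, hint ν hνTI, hDdef]; ring
  -- oscillation bounds
  have hc0 : ∀ y, 0 ≤ osc f y := osc_nonneg _ hf
  have hcsum : ∀ s : Finset (Site d), ∑ y ∈ s, osc f y ≤ 1 := by
    intro s
    have h2 : ∑ y ∈ s, osc f y = ∑ y ∈ s ∩ cube d m, osc f y := by
      refine (Finset.sum_subset Finset.inter_subset_left fun y hy hy' => ?_).symm
      exact osc_eq_zero _ hf fun hmem => hy' (Finset.mem_inter.2 ⟨hy, hmem⟩)
    rw [h2]
    calc ∑ y ∈ s ∩ cube d m, osc f y ≤ ∑ y ∈ cube d m, osc f y :=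
          Finset.sum_le_sum_of_subset_of_nonneg Finset.inter_subset_right
            fun y _ _ => hc0 y
      _ = oscNorm1 f := (oscNorm1_eq_sum _ hf).symm
      _ ≤ 1 := h1
  have hShiftSum : ∀ (s : Finset (Site d)) (x : Site d), ∑ a ∈ s, osc f (x - a) ≤ 1 := by
    intro s x
    have hinj : Set.InjOn (fun a => x - a) s := fun a _ b _ h => by
      simpa using sub_right_injective h
    rw [← Finset.sum_image (f := osc f) (g := fun a => x - a) hinj]
    exact hcsum _
  have hShiftSum2 : ∀ (s : Finset (Site d)) (a : Site d), ∑ x ∈ s, osc f (x - a) ≤ 1 := by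
    intro s a
    have hinj : Set.InjOn (fun x : Site d => x - a) s := fun y _ z _ h => by
      simpa using sub_left_injective h
    rw [← Finset.sum_image (f := osc f) (g := fun x => x - a) hinj]
    exact hcsum _
  set S : Site d → ℝ := fun x => ∑ a ∈ A, osc f (x - a) with hS
  have hS0 : ∀ x, 0 ≤ S x := fun x => Finset.sum_nonneg fun a _ => hc0 _
  have hS1 : ∀ x, S x ≤ 1 := fun x => hShiftSum A x
  have hoscg : ∀ x, osc g x ≤ t * S x := by
    intro x
    refine osc_le x fun σ => ?_
    have hterm : ∀ a ∈ A, f (shift a σ) - f (shift a (flipAt σ x)) ≤ osc f (x - a) := by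
      intro a ha
      rw [shift_flipAt]
      set τ : Config (Site d) := shift a σ with hτ
      have := le_osc (cube d m) hf (x - a) (flipAt τ (x - a))
      rwa [flipAt_flipAt] at this
    have : g (flipAt σ x) - g σ = t * ∑ a ∈ A, (f (shift a σ) - f (shift a (flipAt σ x))) := by
      simp only [hg, Finset.sum_sub_distrib]; ring
    rw [this]
    refine mul_le_mul_of_nonneg_left ?_ ht
    exact le_trans (Finset.sum_le_sum hterm) le_rfl
  have hoscg0 : ∀ x, 0 ≤ osc g x := osc_nonneg _ hgloc
  have hsq : oscNormSq g ≤ t ^ 2 * A.card := by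
    rw [oscNormSq_eq_sum Λn hgloc]
    calc ∑ x ∈ Λn, osc g x ^ 2
        ≤ ∑ x ∈ Λn, (t * S x) ^ 2 := by
          refine Finset.sum_le_sum fun x _ => ?_
          exact sq_le_sq' (by nlinarith [hoscg0 x, hoscg x, ht, hS0 x]) (hoscg x)
      _ ≤ ∑ x ∈ Λn, t ^ 2 * S x := by
          refine Finset.sum_le_sum fun x _ => ?_
          have : S x ^ 2 ≤ S x := by nlinarith [hS0 x, hS1 x]
          calc (t * S x) ^ 2 = t ^ 2 * S x ^ 2 := by ring
            _ ≤ t ^ 2 * S x := by nlinarith [sq_nonneg t]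
      _ = t ^ 2 * ∑ a ∈ A, ∑ x ∈ Λn, osc f (x - a) := by
          rw [← Finset.mul_sum]
          congr 1
          exact Finset.sum_comm
      _ ≤ t ^ 2 * ∑ a ∈ A, (1:ℝ) := by
          refine mul_le_mul_of_nonneg_left ?_ (sq_nonneg t)
          exact Finset.sum_le_sum fun a _ => hShiftSum2 Λn a
      _ = t ^ 2 * A.card := by rw [Finset.sum_const, nsmul_eq_mul, mul_one]
  -- GCB
  have hlog : Real.log (∫ σ, Real.exp (g σ - ∫ τ, g τ ∂μ) ∂μ) ≤ C / 2 * (t ^ 2 * A.card) :=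
    le_trans (hgcb g ⟨Λn, hgloc⟩) (by nlinarith [hsq])
  -- combine
  have hfinal := relEntVol_ge Λn μ ν hgloc
  refine le_trans (ENNReal.ofReal_le_ofReal ?_) hfinal
  have hAc : (0:ℝ) ≤ A.card := Nat.cast_nonneg _
  have : (A.card : ℝ) * (D ^ 2 / (2 * C)) = t * A.card * D - C / 2 * (t ^ 2 * A.card) := by
    rw [htdef]; field_simp; ring
  rw [this, ← hdiff]
  linarith [hlog]
end SiteLemmas
section Limits
set_option linter.unusedSectionVars false
set_option maxHeartbeats 1600000

lemma card_cube (d n : ℕ) : (cube d n).card = (2 * n + 1) ^ d := by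
  rw [cube, Fintype.card_piFinset]
  have h : (Finset.Icc (-(n:ℤ)) (n:ℤ)).card = 2 * n + 1 := by
    rw [Int.card_Icc]; omega
  simp [h]

lemma card_cube_pos (d n : ℕ) : 0 < (cube d n).card := by
  rw [card_cube]; positivity

lemma tendsto_cube_ratio (d m : ℕ) :
    Filter.Tendsto (fun n : ℕ => ((cube d (n - m)).card : ℝ) / ((cube d n).card : ℝ))
      Filter.atTop (nhds 1) := by
  have hden : Filter.Tendsto (fun n : ℕ => 2 * (n:ℝ) + 1) Filter.atTop Filter.atTop := by
    apply Filter.tendsto_atTop_add_const_right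
    exact (tendsto_natCast_atTop_atTop).const_mul_atTop (by norm_num : (0:ℝ) < 2)
  have hfrac : Filter.Tendsto (fun n : ℕ => (2 * (m:ℝ)) / (2 * n + 1))
      Filter.atTop (nhds 0) := Filter.Tendsto.div_atTop tendsto_const_nhds hden
  have hu : Filter.Tendsto (fun n : ℕ => 1 - (2 * (m:ℝ)) / (2 * n + 1))
      Filter.atTop (nhds 1) := by
    have := (tendsto_const_nhds (x := (1:ℝ)) (f := Filter.atTop (α := ℕ))).sub hfrac
    simpa using this
  have hupow : Filter.Tendsto (fun n : ℕ => (1 - (2 * (m:ℝ)) / (2 * n + 1)) ^ d)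
      Filter.atTop (nhds 1) := by
    have := hu.pow d
    simpa using this
  refine hupow.congr' ?_
  filter_upwards [Filter.eventually_ge_atTop m] with n hn
  have hpos : (0:ℝ) < 2 * n + 1 := by positivity
  rw [card_cube, card_cube]
  push_cast [Nat.cast_sub hn]
  rw [← div_pow]
  congr 1
  field_simp
  ring

lemma sStar_ge {d : ℕ} (μ ν : Measure (Config (Site d)))
    [IsProbabilityMeasure μ] [IsProbabilityMeasure ν]
    (hμTI : TransInv μ) (hνTI : TransInv ν) (C : ℝ) (hC : 0 < C) (hgcb : GCB μ C)
    {f : Config (Site d) → ℝ} (hfl : IsLocal f) (h1 : oscNorm1 f ≤ 1)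
    (hD : 0 ≤ ∫ σ, f σ ∂μ - ∫ σ, f σ ∂ν) :
    ENNReal.ofReal ((∫ σ, f σ ∂μ - ∫ σ, f σ ∂ν) ^ 2 / (2 * C)) ≤ sStar ν μ := by
  classical
  obtain ⟨Λ₀, hf₀⟩ := hfl
  obtain ⟨m, hm⟩ := exists_cube_subset Λ₀
  have hf : LocalOn (cube d m) f := localOn_mono hm hf₀
  set D : ℝ := ∫ σ, f σ ∂μ - ∫ σ, f σ ∂ν with hDdef
  set b : ℝ := D ^ 2 / (2 * C) with hb
  have hb0 : 0 ≤ b := by positivity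
  set w : ℕ → ℝ≥0∞ := fun n =>
    ENNReal.ofReal (b * (((cube d (n - m)).card : ℝ) / ((cube d n).card : ℝ))) with hw
  have hwle : ∀ᶠ n in Filter.atTop,
      w n ≤ relEntVol ν μ (cube d n) / ((cube d n).card : ℝ≥0∞) := by
    filter_upwards [Filter.eventually_ge_atTop m] with n hn
    have hkey := key_bound μ ν hμTI hνTI C hC hgcb hf h1 hD hn
    have hcn : (0:ℝ) < ((cube d n).card : ℝ) := by
      exact_mod_cast card_cube_pos d n
    have heq : w n = ENNReal.ofReal (((cube d (n - m)).card : ℝ) * b)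
        / ((cube d n).card : ℝ≥0∞) := by
      rw [hw]
      simp only []
      rw [show b * (((cube d (n - m)).card : ℝ) / ((cube d n).card : ℝ))
          = (((cube d (n - m)).card : ℝ) * b) / ((cube d n).card : ℝ) by ring]
      rw [ENNReal.ofReal_div_of_pos hcn, ENNReal.ofReal_natCast]
    rw [heq]
    exact ENNReal.div_le_div_right hkey _
  have hwt : Filter.Tendsto w Filter.atTop (nhds (ENNReal.ofReal b)) := by
    have := ENNReal.tendsto_ofReal
      ((tendsto_const_nhds (x := b) (f := Filter.atTop (α := ℕ))).mul (tendsto_cube_ratio d m))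
    simpa using this
  have hliminf : Filter.liminf w Filter.atTop = ENNReal.ofReal b := hwt.liminf_eq
  calc ENNReal.ofReal (D ^ 2 / (2 * C)) = Filter.liminf w Filter.atTop := by rw [hliminf]
    _ ≤ sStar ν μ := Filter.liminf_le_liminf hwle

lemma sStar_ge_abs {d : ℕ} (μ ν : Measure (Config (Site d)))
    [IsProbabilityMeasure μ] [IsProbabilityMeasure ν]
    (hμTI : TransInv μ) (hνTI : TransInv ν) (C : ℝ) (hC : 0 < C) (hgcb : GCB μ C)
    {f : Config (Site d) → ℝ} (hfl : IsLocal f) (h1 : oscNorm1 f ≤ 1) :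
    ENNReal.ofReal ((∫ σ, f σ ∂μ - ∫ σ, f σ ∂ν) ^ 2 / (2 * C)) ≤ sStar ν μ := by
  by_cases hD : 0 ≤ ∫ σ, f σ ∂μ - ∫ σ, f σ ∂ν
  · exact sStar_ge μ ν hμTI hνTI C hC hgcb hfl h1 hD
  · obtain ⟨Λ, hΛ⟩ := hfl
    have hfl' : IsLocal fun σ => -f σ := ⟨Λ, localOn_neg Λ hΛ⟩
    have h1' : oscNorm1 (fun σ => -f σ) ≤ 1 := by rw [oscNorm1_neg Λ hΛ]; exact h1
    have hneg : ∀ (ρ : Measure (Config (Site d))), ∫ σ, -f σ ∂ρ = -∫ σ, f σ ∂ρ :=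
      fun ρ => integral_neg f
    have hD' : 0 ≤ ∫ σ, (fun σ => -f σ) σ ∂μ - ∫ σ, (fun σ => -f σ) σ ∂ν := by
      simp only [hneg]
      linarith [not_le.1 hD]
    have := sStar_ge μ ν hμTI hνTI C hC hgcb hfl' h1' hD'
    have heq : (∫ σ, (fun σ => -f σ) σ ∂μ - ∫ σ, (fun σ => -f σ) σ ∂ν) ^ 2
        = (∫ σ, f σ ∂μ - ∫ σ, f σ ∂ν) ^ 2 := by
      simp only [hneg]; ring
    rwa [heq] at this

end Limits
section Main
set_option linter.unusedSectionVars false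
set_option maxHeartbeats 1600000

lemma generateFrom_cyl (d : ℕ) :
    (inferInstance : MeasurableSpace (Config (Site d))) =
      MeasurableSpace.generateFrom
        {s : Set (Config (Site d)) | ∃ Λ b, s = cyl Λ b} := by
  apply le_antisymm
  · rw [show (inferInstance : MeasurableSpace (Config (Site d)))
        = MeasurableSpace.pi from rfl, MeasurableSpace.pi]
    refine iSup_le fun x => ?_
    rintro s ⟨u, -, rfl⟩
    have hu : (fun τ : Config (Site d) => τ x) ⁻¹' u
        = ⋃ b ∈ u, cyl {x} (fun _ => b) := by
      ext τ
      simp [cyl]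
    rw [hu]
    refine MeasurableSet.biUnion u.to_countable fun b _ =>
      MeasurableSpace.measurableSet_generateFrom ⟨{x}, fun _ => b, rfl⟩
  · refine MeasurableSpace.generateFrom_le ?_
    rintro s ⟨Λ, b, rfl⟩
    exact measurableSet_cyl Λ b

lemma isPiSystem_cyl (d : ℕ) :
    IsPiSystem {s : Set (Config (Site d)) | ∃ Λ b, s = cyl Λ b} := by
  rintro s ⟨Λ, b, rfl⟩ t ⟨Λ', b', rfl⟩ hne
  obtain ⟨σ, hσ1, hσ2⟩ := hne
  refine ⟨Λ ∪ Λ', σ, ?_⟩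
  ext τ
  simp only [Set.mem_inter_iff, cyl, Set.mem_setOf_eq, Finset.mem_union]
  constructor
  · rintro ⟨h1, h2⟩ x hx
    rcases hx with hx | hx
    · rw [h1 x hx, ← hσ1 x hx]
    · rw [h2 x hx, ← hσ2 x hx]
  · intro h
    exact ⟨fun x hx => by rw [h x (Or.inl hx), hσ1 x hx],
           fun x hx => by rw [h x (Or.inr hx), hσ2 x hx]⟩

lemma eq_of_cyl_eq {d : ℕ} (μ ν : Measure (Config (Site d)))
    [IsProbabilityMeasure μ] [IsProbabilityMeasure ν]
    (h : ∀ (Λ : Finset (Site d)) (b : Site d → Bool), μ (cyl Λ b) = ν (cyl Λ b)) :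
    ν = μ := by
  refine (MeasureTheory.ext_of_generate_finite _ (generateFrom_cyl d) (isPiSystem_cyl d)
    ?_ ?_)
  · rintro s ⟨Λ, b, rfl⟩
    exact (h Λ b).symm
  · simp

theorem entropy_density_dbar_bound' {d : ℕ} (μ ν : Measure (Config (Site d)))
    [IsProbabilityMeasure μ] [IsProbabilityMeasure ν]
    (hμTI : TransInv μ) (hνTI : TransInv ν) (C : ℝ) (hC : 0 < C) (hgcb : GCB μ C) :
    ENNReal.ofReal (dbar ν μ ^ 2 / (2 * C)) ≤ sStar ν μ ∧
    (ν ≠ μ → 0 < sStar ν μ) := by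
  classical
  have hzero : IsLocal (fun _ : Config (Site d) => (0:ℝ)) ∧
      oscNorm1 (fun _ : Config (Site d) => (0:ℝ)) ≤ 1 :=
    ⟨⟨∅, localOn_zero ∅⟩, by rw [oscNorm1_zero]; norm_num⟩
  haveI hne : Nonempty {f : Config (Site d) → ℝ // IsLocal f ∧ oscNorm1 f ≤ 1} :=
    ⟨⟨fun _ => 0, hzero⟩⟩
  -- Part 2 helper: a separating local function when ν ≠ μ
  have hpart2 : ν ≠ μ → 0 < sStar ν μ := by
    intro hνμ
    have hsep : ∃ (Λ : Finset (Site d)) (b : Site d → Bool), μ (cyl Λ b) ≠ ν (cyl Λ b) := by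
      by_contra hcon
      push_neg at hcon
      exact hνμ (eq_of_cyl_eq μ ν hcon)
    obtain ⟨Λ, b, hΛb⟩ := hsep
    have hΛne : Λ.Nonempty := by
      rcases Finset.eq_empty_or_nonempty Λ with h | h
      · exfalso
        apply hΛb
        have : cyl Λ b = Set.univ := by
          ext σ; simp [cyl, h]
        rw [this, measure_univ, measure_univ]
      · exact h
    have hcard : (0:ℝ) < (Λ.card : ℝ) := by
      exact_mod_cast Finset.card_pos.2 hΛne
    set g : Config (Site d) → ℝ :=
      fun σ => (cyl Λ b).indicator (fun _ => (Λ.card : ℝ)⁻¹) σ with hgdef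
    have hgloc : LocalOn Λ g := by
      intro σ τ hστ
      simp only [hgdef]
      have : σ ∈ cyl Λ b ↔ τ ∈ cyl Λ b := by
        constructor <;> intro h x hx
        · rw [← hστ x hx]; exact h x hx
        · rw [hστ x hx]; exact h x hx
      by_cases hσ : σ ∈ cyl Λ b
      · rw [Set.indicator_of_mem hσ, Set.indicator_of_mem (this.1 hσ)]
      · rw [Set.indicator_of_notMem hσ, Set.indicator_of_notMem (fun hτ => hσ (this.2 hτ))]
    have hgosc : ∀ x, osc g x ≤ (Λ.card : ℝ)⁻¹ := by
      intro x
      refine osc_le x fun σ => ?_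
      have hv : ∀ τ : Config (Site d), 0 ≤ g τ ∧ g τ ≤ (Λ.card : ℝ)⁻¹ := by
        intro τ
        simp only [hgdef]
        by_cases hτ : τ ∈ cyl Λ b
        · rw [Set.indicator_of_mem hτ]
          exact ⟨by positivity, le_refl _⟩
        · rw [Set.indicator_of_notMem hτ]
          exact ⟨le_refl _, by positivity⟩
      linarith [(hv (flipAt σ x)).2, (hv σ).1]
    have hg1 : oscNorm1 g ≤ 1 := by
      rw [oscNorm1_eq_sum Λ hgloc]
      calc ∑ x ∈ Λ, osc g x ≤ ∑ x ∈ Λ, (Λ.card : ℝ)⁻¹ :=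
            Finset.sum_le_sum fun x _ => hgosc x
        _ = Λ.card * (Λ.card : ℝ)⁻¹ := by rw [Finset.sum_const, nsmul_eq_mul]
        _ = 1 := mul_inv_cancel₀ hcard.ne'
    have hint : ∀ (ρ : Measure (Config (Site d))) [IsProbabilityMeasure ρ],
        ∫ σ, g σ ∂ρ = (ρ (cyl Λ b)).toReal * (Λ.card : ℝ)⁻¹ := by
      intro ρ _
      simp only [hgdef]
      rw [MeasureTheory.integral_indicator_const _ (measurableSet_cyl Λ b), smul_eq_mul, measureReal_def]
    have hDne : (∫ σ, g σ ∂μ) - ∫ σ, g σ ∂ν ≠ 0 := by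
      rw [hint μ, hint ν]
      intro hcontra
      apply hΛb
      have h2 : (μ (cyl Λ b)).toReal = (ν (cyl Λ b)).toReal := by
        have h3 : ((μ (cyl Λ b)).toReal - (ν (cyl Λ b)).toReal) * (Λ.card : ℝ)⁻¹ = 0 := by
          linarith [hcontra]
        rcases mul_eq_zero.1 h3 with h4 | h4
        · linarith
        · exact absurd h4 (by positivity)
      exact (ENNReal.toReal_eq_toReal_iff' (measure_ne_top μ _) (measure_ne_top ν _)).1 h2
    have hbound := sStar_ge_abs μ ν hμTI hνTI C hC hgcb ⟨Λ, hgloc⟩ hg1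
    refine lt_of_lt_of_le ?_ hbound
    apply ENNReal.ofReal_pos.2
    have : (0:ℝ) < ((∫ σ, g σ ∂μ) - ∫ σ, g σ ∂ν) ^ 2 := by positivity
    positivity
  refine ⟨?_, hpart2⟩
  -- Part 1
  by_cases htop : sStar ν μ = ⊤
  · rw [htop]; exact le_top
  · set s : ℝ := (sStar ν μ).toReal with hs
    have hs0 : 0 ≤ s := ENNReal.toReal_nonneg
    have hP : ∀ gg : {f : Config (Site d) → ℝ // IsLocal f ∧ oscNorm1 f ≤ 1},
        (∫ σ, (gg : Config (Site d) → ℝ) σ ∂μ - ∫ σ, (gg : Config (Site d) → ℝ) σ ∂ν)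
          ≤ Real.sqrt (2 * C * s) := by
      intro gg
      set D : ℝ := ∫ σ, (gg : Config (Site d) → ℝ) σ ∂μ
        - ∫ σ, (gg : Config (Site d) → ℝ) σ ∂ν with hDdef
      have hb := sStar_ge_abs μ ν hμTI hνTI C hC hgcb gg.2.1 gg.2.2
      have hsq : D ^ 2 / (2 * C) ≤ s :=
        (ENNReal.ofReal_le_iff_le_toReal htop).1 hb
      have hsq2 : D ^ 2 ≤ 2 * C * s := by
        rw [div_le_iff₀ (by positivity : (0:ℝ) < 2 * C)] at hsq
        linarith [hsq]
      by_cases hD : 0 ≤ D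
      · exact (Real.le_sqrt hD (by positivity)).2 hsq2
      · exact le_trans (not_le.1 hD).le (Real.sqrt_nonneg _)
    have hbdd : BddAbove (Set.range fun gg :
        {f : Config (Site d) → ℝ // IsLocal f ∧ oscNorm1 f ≤ 1} =>
        (∫ σ, (gg : Config (Site d) → ℝ) σ ∂μ - ∫ σ, (gg : Config (Site d) → ℝ) σ ∂ν)) := by
      refine ⟨Real.sqrt (2 * C * s), ?_⟩
      rintro r ⟨gg, rfl⟩
      exact hP gg
    have hdbar_le : dbar ν μ ≤ Real.sqrt (2 * C * s) := ciSup_le hP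
    have hdbar0 : 0 ≤ dbar ν μ := by
      have := le_ciSup hbdd (⟨fun _ => 0, hzero⟩ :
        {f : Config (Site d) → ℝ // IsLocal f ∧ oscNorm1 f ≤ 1})
      simpa [dbar] using this
    have hfin : dbar ν μ ^ 2 ≤ 2 * C * s := by
      calc dbar ν μ ^ 2 ≤ Real.sqrt (2 * C * s) ^ 2 :=
            pow_le_pow_left₀ hdbar0 hdbar_le 2
        _ = 2 * C * s := Real.sq_sqrt (by positivity)
    calc ENNReal.ofReal (dbar ν μ ^ 2 / (2 * C))
        ≤ ENNReal.ofReal s := by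
          refine ENNReal.ofReal_le_ofReal ?_
          rw [div_le_iff₀ (by positivity : (0:ℝ) < 2 * C)]
          linarith [hfin]
      _ = sStar ν μ := ENNReal.ofReal_toReal htop

end Main

/-- if a translation-invariant probability measure `μ` satisfies
`GCB(C)`, then for every translation-invariant probability measure `ν`,
`s_*(ν|μ) ≥ d̄(ν,μ)²/(2C)`; in particular `ν ≠ μ` implies `s_*(ν|μ) > 0`. -/
theorem entropy_density_dbar_bound {d : ℕ} (μ ν : Measure (Config (Site d)))
    [IsProbabilityMeasure μ] [IsProbabilityMeasure ν]
    (hμTI : TransInv μ) (hνTI : TransInv ν) (C : ℝ) (hC : 0 < C) (hgcb : GCB μ C) :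
    ENNReal.ofReal (dbar ν μ ^ 2 / (2 * C)) ≤ sStar ν μ ∧
    (ν ≠ μ → 0 < sStar ν μ) :=
  entropy_density_dbar_bound' μ ν hμTI hνTI C hC hgcb
end DV
end
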